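/- Let G = (V,E) be a finite digraph, with 𝒟, 𝒯, ℬ, 𝒞 ⊆ V satisfying 𝒟 ∩ 𝒯 = ∅, 𝒟 ∩ ℬ = ∅, 𝒯 ∩ 𝒞 = ∅. Let S* be the minimal conditioned invariant (w.r.t. 𝒞) superset of 𝒟 and Z* the maximal controlled invariant (w.r.t. ℬ) subset of V ∖ 𝒯. Suppose that for every directed path P_j = (v_1, …, v_{κ_j}) from v_1 ∈ 𝒟 to v_{κ_j} ∈ 𝒯, the index o_j = min{s < κ_j : v_s ∈ 𝒞 ∩ P_j} and the index i_j = max{s ≥ 2 : v_s ∈ ℬ ∩ P_j} are both well-defined and satisfy o_j < i_j. Then S* ⊆ Z*. -/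

import Mathlib

variable {V : Type*} [Fintype V]

/-- A directed path in the digraph `E`. -/
def IsPath (E : V → V → Prop) {k : ℕ} (p : Fin (k + 1) → V) : Prop :=
  Function.Injective p ∧ ∀ i : Fin k, E (p i.castSucc) (p i.succ)

/-- There is no walk from `D` to `T` that avoids `C` before some split point `m`
and avoids `B` after it. -/
lemma DDPDF_no_walk (E : V → V → Prop) (D T B C : Set V)
    (hpaths : ∀ (k : ℕ) (p : Fin (k + 1) → V), IsPath E p →
      p 0 ∈ D → p (Fin.last k) ∈ T →
      ∃ o i : Fin (k + 1),
        o ≠ Fin.last k ∧ p o ∈ C ∧ (∀ s : Fin (k + 1), s ≠ Fin.last k → p s ∈ C → o ≤ s) ∧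
        i ≠ 0 ∧ p i ∈ B ∧ (∀ s : Fin (k + 1), s ≠ 0 → p s ∈ B → s ≤ i) ∧
        o < i) :
    ∀ (N : ℕ) (f : ℕ → V), (∀ s < N, E (f s) (f (s + 1))) → f 0 ∈ D → f N ∈ T →
      ∀ m, (∀ s < m, f s ∉ C) → (∀ s, m < s → s ≤ N → f s ∉ B) → False := by
  intro N
  induction N using Nat.strong_induction_on with
  | _ N IH =>
    intro f hchain hD hT m hC hB
    by_cases hinj : ∀ a b : ℕ, a ≤ N → b ≤ N → f a = f b → a = b
    · -- injective walk: it is a path, apply hpaths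
      set p : Fin (N + 1) → V := fun s => f s.val with hp
      obtain ⟨o, i, -, hoC, -, -, hiB, -, hoi⟩ :=
        hpaths N p
          ⟨by
            intro a b hab
            exact Fin.ext (hinj a.val b.val (by omega) (by omega) hab),
           by
            intro i
            simpa [hp, Fin.coe_castSucc, Fin.val_succ] using hchain i.val i.isLt⟩
          (by simpa [hp] using hD) (by simpa [hp, Fin.last] using hT)
      have h1 : m ≤ o.val := by
        by_contra h
        exact hC o.val (by omega) hoC
      have h2 : i.val ≤ m := by
        by_contra h
        exact hB i.val (by omega) (by omega) hiB
      have := Fin.lt_iff_val_lt_val.mp hoi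
      omega
    · -- a repeated vertex: cut the cycle and apply the induction hypothesis
      push_neg at hinj
      obtain ⟨a, b, ha, hb, hab, hne⟩ := hinj
      -- WLOG a < b
      wlog hlt : a < b generalizing a b
      · exact this b a hb ha hab.symm (Ne.symm hne) (by omega)
      set d := b - a with hd
      have hd1 : 1 ≤ d := by omega
      set g : ℕ → V := fun s => if s ≤ a then f s else f (s + d) with hg
      set m' : ℕ := if m < b then min m a else m - d with hm'
      refine IH (N - d) (by omega) g ?_ ?_ ?_ m' ?_ ?_
      · intro s hs
        by_cases h1 : s < a
        · simp only [hg]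
          rw [if_pos (by omega), if_pos (by omega)]
          exact hchain s (by omega)
        by_cases h2 : s = a
        · simp only [hg]
          rw [if_pos (by omega), if_neg (by omega)]
          subst h2
          rw [hab]
          have e1 : s + 1 + d = b + 1 := by omega
          rw [e1]
          exact hchain b (by omega)
        · simp only [hg]
          rw [if_neg (by omega), if_neg (by omega)]
          have e1 : s + 1 + d = s + d + 1 := by omega
          rw [e1]
          exact hchain (s + d) (by omega)
      · simp only [hg]
        rw [if_pos (by omega)]
        exact hD
      · by_cases hbN : b = N
        · have e1 : N - d = a := by omega
          simp only [hg]
          rw [e1, if_pos le_rfl, hab, hbN]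
          exact hT
        · simp only [hg]
          rw [if_neg (by omega)]
          have e1 : N - d + d = N := by omega
          rw [e1]
          exact hT
      · intro s hs
        by_cases hsa : s ≤ a
        · simp only [hg]
          rw [if_pos hsa]
          apply hC
          simp only [hm'] at hs
          split_ifs at hs <;> omega
        · simp only [hg]
          rw [if_neg hsa]
          apply hC
          simp only [hm'] at hs
          split_ifs at hs <;> omega
      · intro s hs1 hs2
        by_cases hsa : s ≤ a
        · simp only [hg]
          rw [if_pos hsa]
          apply hB
          · simp only [hm'] at hs1
            split_ifs at hs1 <;> omega
          · omega
        · simp only [hg]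
          rw [if_neg hsa]
          apply hB
          · simp only [hm'] at hs1
            split_ifs at hs1 <;> omega
          · omega

/-- Sufficiency direction of the graphical DDPDF solvability condition: if along
every directed path from `𝒟` to `𝒯` the first output node (other than the last
node) comes strictly before the last input node (other than the first node), then
the minimal conditioned invariant superset `S*` of `𝒟` is contained in the maximal
controlled invariant subset `Z*` of `V ∖ 𝒯`. -/
theorem DDPDF_sufficiency (E : V → V → Prop) (D T B C Sstar Zstar : Set V)
    (hDT : D ∩ T = ∅) (hDB : D ∩ B = ∅) (hTC : T ∩ C = ∅)
    -- `S*` is the minimal conditioned invariant superset of `𝒟`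
    (hSsub : D ⊆ Sstar)
    (hSinv : ∀ i ∈ Sstar, i ∉ C → ∀ j, E i j → j ∈ Sstar)
    (hSmin : ∀ W : Set V, D ⊆ W → (∀ i ∈ W, i ∉ C → ∀ j, E i j → j ∈ W) → Sstar ⊆ W)
    -- `Z*` is the maximal controlled invariant subset of `V ∖ 𝒯`
    (hZsub : Zstar ⊆ Tᶜ)
    (hZinv : ∀ i ∈ Zstar, ∀ j, E i j → j ∈ Zstar ∪ B)
    (hZmax : ∀ W : Set V, W ⊆ Tᶜ → (∀ i ∈ W, ∀ j, E i j → j ∈ W ∪ B) → W ⊆ Zstar)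
    -- on every `𝒟`-to-`𝒯` path the minimal output index precedes the maximal input index
    (hpaths : ∀ (k : ℕ) (p : Fin (k + 1) → V), IsPath E p →
      p 0 ∈ D → p (Fin.last k) ∈ T →
      ∃ o i : Fin (k + 1),
        o ≠ Fin.last k ∧ p o ∈ C ∧ (∀ s : Fin (k + 1), s ≠ Fin.last k → p s ∈ C → o ≤ s) ∧
        i ≠ 0 ∧ p i ∈ B ∧ (∀ s : Fin (k + 1), s ≠ 0 → p s ∈ B → s ≤ i) ∧
        o < i) :
    Sstar ⊆ Zstar := by
  have nowalk := DDPDF_no_walk E D T B C hpaths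
  -- Q: vertices with no B-avoiding walk to T
  set Q : Set V := {v | ∀ (N : ℕ) (f : ℕ → V), (∀ s < N, E (f s) (f (s + 1))) → f 0 = v →
      f N ∈ T → (∀ s, 0 < s → s ≤ N → f s ∉ B) → False} with hQ
  -- R: vertices reachable from D by a C-avoiding walk
  set R : Set V := {v | ∃ (N : ℕ) (f : ℕ → V), (∀ s < N, E (f s) (f (s + 1))) ∧ f 0 ∈ D ∧
      f N = v ∧ ∀ s < N, f s ∉ C} with hR
  have hSR : Sstar ⊆ R := by
    apply hSmin
    · intro v hv
      exact ⟨0, fun _ => v, by omega, hv, rfl, by omega⟩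
    · rintro v ⟨N, f, hchain, hD0, hfN, hCf⟩ hvC j hEvj
      refine ⟨N + 1, fun s => if s ≤ N then f s else j, ?_, ?_, ?_, ?_⟩
      · intro s hs
        by_cases h1 : s < N
        · dsimp only; rw [if_pos (by omega), if_pos (by omega)]
          exact hchain s h1
        · have h2 : s = N := by omega
          subst h2
          dsimp only; rw [if_pos le_rfl, if_neg (by omega), hfN]
          exact hEvj
      · dsimp only; rw [if_pos (by omega)]; exact hD0
      · dsimp only; rw [if_neg (by omega)]
      · intro s hs
        dsimp only; rw [if_pos (by omega)]
        by_cases h1 : s < N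
        · exact hCf s h1
        · have h2 : s = N := by omega
          subst h2
          rw [hfN]
          exact hvC
  have hRQ : R ⊆ Q := by
    rintro v ⟨N₁, f₁, hchain₁, hD₁, hfN₁, hCf₁⟩
    intro N f hchain hf0 hfN hBf
    refine nowalk (N₁ + N) (fun s => if s ≤ N₁ then f₁ s else f (s - N₁)) ?_ ?_ ?_ N₁ ?_ ?_
    · intro s hs
      by_cases h1 : s < N₁
      · rw [if_pos (by omega), if_pos (by omega)]
        exact hchain₁ s h1
      by_cases h2 : s = N₁
      · subst h2
        rw [if_pos le_rfl, if_neg (by omega), hfN₁, ← hf0]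
        have e1 : s + 1 - s = 1 := by omega
        rw [e1]
        exact hchain 0 (by omega)
      · rw [if_neg (by omega), if_neg (by omega)]
        have e1 : s + 1 - N₁ = s - N₁ + 1 := by omega
        rw [e1]
        exact hchain (s - N₁) (by omega)
    · rw [if_pos (by omega)]; exact hD₁
    · by_cases h1 : N = 0
      · subst h1
        rw [Nat.add_zero, if_pos le_rfl, hfN₁, ← hf0]
        exact hfN
      · rw [if_neg (by omega)]
        have e1 : N₁ + N - N₁ = N := by omega
        rw [e1]
        exact hfN
    · intro s hs
      rw [if_pos (by omega)]
      exact hCf₁ s hs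
    · intro s hs1 hs2
      rw [if_neg (by omega)]
      exact hBf (s - N₁) (by omega) (by omega)
  have hQZ : Q ⊆ Zstar := by
    apply hZmax
    · intro v hv hvT
      exact hv 0 (fun _ => v) (by omega) rfl hvT (by omega)
    · intro v hvQ j hEvj
      by_cases hjB : j ∈ B
      · exact Or.inr hjB
      left
      intro N f hchain hf0 hfN hBf
      refine hvQ (N + 1) (fun s => if s = 0 then v else f (s - 1)) ?_ rfl ?_ ?_
      · intro s hs
        by_cases h1 : s = 0
        · subst h1
          rw [if_pos rfl, if_neg (by omega)]
          simpa [hf0] using hEvj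
        · rw [if_neg h1, if_neg (by omega)]
          have e1 : s + 1 - 1 = s - 1 + 1 := by omega
          rw [e1]
          exact hchain (s - 1) (by omega)
      · rw [if_neg (by omega)]
        have e1 : N + 1 - 1 = N := by omega
        rw [e1]
        exact hfN
      · intro s hs1 hs2
        rw [if_neg (by omega)]
        by_cases h1 : s = 1
        · subst h1
          simpa [hf0] using hjB
        · exact hBf (s - 1) (by omega) (by omega)
  exact fun v hv => hQZ (hRQ (hSR hv))
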